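/- Let m ≥ 2 be an even integer and n ≥ 1. Let c, d ∈ ℝ^n satisfy c_{i_1}+c_{i_2}+⋯+c_{i_m} ≠ 0 for all i_1,…,i_m ∈ {1,…,n} and d_i ≠ 0 for all i ∈ {1,…,n}, and let C be the generalized Cauchy tensor with generating vectors c, d. Then the following statements are equivalent: (i) C is completely decomposable; (ii) C is an SOS tensor; (iii) C is positive semi-definite; (iv) c_i > 0 for all i ∈ {1,…,n}. -/

import Mathlib

open Finset

/-- `A x^m = ∑_{i_1,…,i_m} a_{i_1⋯i_m} x_{i_1}⋯x_{i_m}` for an order `m` dimension `n` tensor. -/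
noncomputable def tApply (m n : ℕ) (a : (Fin m → Fin n) → ℝ) (x : Fin n → ℝ) : ℝ :=
  ∑ i : Fin m → Fin n, a i * ∏ j, x (i j)

/-- An (even order) tensor is positive semi-definite if `A x^m ≥ 0` for all `x`. -/
def IsPSD (m n : ℕ) (a : (Fin m → Fin n) → ℝ) : Prop :=
  ∀ x : Fin n → ℝ, 0 ≤ tApply m n a x

/-- Generalized Cauchy tensor with generating vectors `c, d`:
entries `d_{i_1}⋯d_{i_m} / (c_{i_1}+⋯+c_{i_m})`. -/
noncomputable def genCauchy (m n : ℕ) (c d : Fin n → ℝ) : (Fin m → Fin n) → ℝ :=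
  fun i => (∏ j, d (i j)) / (∑ j, c (i j))

/-- A tensor of even order `m` is an SOS tensor if the form `A x^m` is a finite sum of squares
of homogeneous polynomials of degree `m/2`. -/
def IsSOS (m n : ℕ) (a : (Fin m → Fin n) → ℝ) : Prop :=
  ∃ (r : ℕ) (p : Fin r → MvPolynomial (Fin n) ℝ),
    (∀ k, (p k).IsHomogeneous (m / 2)) ∧
    ∀ x : Fin n → ℝ, tApply m n a x = ∑ k, (MvPolynomial.eval x (p k)) ^ 2

/-- A tensor is completely decomposable if it is a finite sum of `m`-th rank-one powers `u^m`. -/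
def IsCompletelyDecomposable (m n : ℕ) (a : (Fin m → Fin n) → ℝ) : Prop :=
  ∃ (r : ℕ) (u : Fin r → Fin n → ℝ), ∀ i, a i = ∑ k, ∏ j, u k (i j)

open MeasureTheory in
/-- The convex hull of a compact set in a finite-dimensional real space is compact. -/
lemma aux_isCompact_convexHull {ι : Type} [Fintype ι] {K : Set (ι → ℝ)} (hK : IsCompact K) :
    IsCompact (convexHull ℝ K) := by
  rcases K.eq_empty_or_nonempty with rfl | ⟨k0, hk0⟩
  · simp
  classical
  set N := Module.finrank ℝ (ι → ℝ) + 1 with hN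
  set Φ : (Fin N → ℝ) × (Fin N → ι → ℝ) → (ι → ℝ) := fun p => ∑ j, p.1 j • p.2 j with hΦdef
  set D : Set ((Fin N → ℝ) × (Fin N → ι → ℝ)) :=
    (stdSimplex ℝ (Fin N)) ×ˢ (Set.univ.pi fun _ => K) with hDdef
  have hD : IsCompact D := IsCompact.prod (isCompact_stdSimplex ..) (isCompact_univ_pi fun _ => hK)
  have hΦc : Continuous Φ := by
    refine continuous_finset_sum _ fun j _ => ?_
    exact ((continuous_apply j).comp continuous_fst).smul
      ((continuous_apply j).comp continuous_snd)
  have himg : Φ '' D = convexHull ℝ K := by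
    apply Set.Subset.antisymm
    · rintro _ ⟨⟨w, z⟩, ⟨hw, hz⟩, rfl⟩
      exact mem_convexHull_of_exists_fintype w z (fun j => hw.1 j) hw.2
        (fun j => hz j (Set.mem_univ j)) rfl
    · intro x hx
      obtain ⟨κ, hκ, z, w, hzK, hAI, hw0, hw1, hwz⟩ :=
        eq_pos_convex_span_of_mem_convexHull hx
      have hcard : Fintype.card κ ≤ N := by
        have h1 := hAI.card_le_finrank_succ
        have h2 := Submodule.finrank_le (vectorSpan ℝ (Set.range z))
        omega
      have hcard' : Fintype.card κ ≤ Fintype.card (Fin N) := by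
        rwa [Fintype.card_fin]
      obtain ⟨f⟩ := Function.Embedding.nonempty_of_card_le hcard'
      set w' : Fin N → ℝ := Function.extend f w 0 with hw'def
      set z' : Fin N → ι → ℝ := Function.extend f z (fun _ => k0) with hz'def
      have himage : ∀ j : Fin N, j ∉ Finset.univ.image f → w' j = 0 := by
        intro j hj
        rw [hw'def, Function.extend_apply']
        · rfl
        · rintro ⟨a, rfl⟩
          exact hj (Finset.mem_image_of_mem f (Finset.mem_univ a))
      have hw'sum : ∑ j, w' j = 1 := by
        rw [← Finset.sum_subset (Finset.subset_univ (Finset.univ.image f))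
          (fun j _ hj => himage j hj)]
        rw [Finset.sum_image (fun a _ b _ h => f.injective h)]
        simp only [hw'def, f.injective.extend_apply]
        exact hw1
      have hcomb : ∑ j, w' j • z' j = x := by
        rw [← Finset.sum_subset (Finset.subset_univ (Finset.univ.image f))
          (fun j _ hj => by rw [himage j hj, zero_smul])]
        rw [Finset.sum_image (fun a _ b _ h => f.injective h)]
        simp only [hw'def, hz'def, f.injective.extend_apply]
        exact hwz
      have hw'0 : ∀ j, 0 ≤ w' j := by
        intro j
        by_cases h : ∃ a, f a = j
        · obtain ⟨a, rfl⟩ := h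
          rw [hw'def, f.injective.extend_apply]
          exact (hw0 a).le
        · rw [hw'def, Function.extend_apply' _ _ _ h]
          exact le_refl 0
      have hz'K : ∀ j, z' j ∈ K := by
        intro j
        by_cases h : ∃ a, f a = j
        · obtain ⟨a, rfl⟩ := h
          rw [hz'def, f.injective.extend_apply]
          exact hzK (Set.mem_range_self a)
        · rw [hz'def, Function.extend_apply' _ _ _ h]
          exact hk0
      exact ⟨(w', z'), ⟨⟨hw'0, hw'sum⟩, fun j _ => hz'K j⟩, hcomb⟩
  exact himg ▸ hD.image hΦc

open MeasureTheory in
/-- Finite positive quadrature for the moments `1/s_i = ∫_0^1 u^{s_i-1} du` (Tchakaloff-type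
statement obtained via Carathéodory's theorem). -/
lemma aux_quadrature {ι : Type} [Fintype ι] (σ : ℝ) (hσ : 0 < σ) (s : ι → ℝ)
    (hs : ∀ i, 2 * σ ≤ s i) :
    ∃ (r : ℕ) (v t : Fin r → ℝ), (∀ k, 0 ≤ v k) ∧ (∀ k, 0 ≤ t k) ∧
      ∀ i, (s i)⁻¹ = ∑ k, v k * t k ^ (s i / σ) := by
  classical
  set e : ι → ℝ := fun i => s i / σ - 1 with hedef
  have he : ∀ i, 1 ≤ e i := by
    intro i
    have : 2 ≤ s i / σ := (le_div_iff₀ hσ).2 (by linarith [hs i])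
    simp only [hedef]; linarith
  have hspos : ∀ i, 0 < s i := fun i => lt_of_lt_of_le (by linarith) (hs i)
  set f : ℝ → ι → ℝ := fun u i => σ⁻¹ * u ^ (e i) with hfdef
  have hfc : Continuous f :=
    continuous_pi fun i => continuous_const.mul (Real.continuous_rpow_const (by linarith [he i]))
  set ν : Measure ℝ := volume.restrict (Set.Icc (0:ℝ) 1) with hνdef
  haveI : IsProbabilityMeasure ν := by
    constructor
    rw [hνdef, Measure.restrict_apply_univ, Real.volume_Icc]
    norm_num
  have hfi : Integrable f ν := hfc.integrableOn_Icc
  set K : Set (ι → ℝ) := f '' Set.Icc 0 1 with hKdef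
  have hKcompact : IsCompact K := isCompact_Icc.image hfc
  have hhull : IsCompact (convexHull ℝ K) := aux_isCompact_convexHull hKcompact
  have hmem : (∫ u, f u ∂ν) ∈ convexHull ℝ K := by
    refine (convex_convexHull ℝ K).integral_mem hhull.isClosed ?_ hfi
    refine (ae_restrict_mem measurableSet_Icc).mono fun u hu => ?_
    exact subset_convexHull ℝ K ⟨u, hu, rfl⟩
  have hcomp : ∀ i, (∫ u, f u ∂ν) i = (s i)⁻¹ := by
    intro i
    have h1 : (∫ u, f u ∂ν) i = ∫ u, f u i ∂ν := by
      have := (ContinuousLinearMap.proj (R := ℝ) (φ := fun _ : ι => ℝ) i).integral_comp_comm hfi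
      simpa using this.symm
    rw [h1]
    have h2 : ∫ u, f u i ∂ν = ∫ u in (0:ℝ)..1, σ⁻¹ * u ^ (e i) := by
      rw [intervalIntegral.integral_of_le zero_le_one, hνdef,
        MeasureTheory.integral_Icc_eq_integral_Ioc]
    rw [h2, intervalIntegral.integral_const_mul, integral_rpow (Or.inl (by linarith [he i]))]
    have h3 : e i + 1 = s i / σ := by simp [hedef]
    rw [Real.one_rpow, Real.zero_rpow (by
      rw [h3]; exact ne_of_gt (div_pos (hspos i) hσ)), h3]
    field_simp
    simp
  rw [mem_convexHull_iff_exists_fintype] at hmem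
  obtain ⟨κ, hκ, w, zf, hw0, hw1, hzf, hsum⟩ := hmem
  have hex : ∀ k, ∃ u ∈ Set.Icc (0:ℝ) 1, f u = zf k := fun k => hzf k
  choose u hu hfu using hex
  refine ⟨Fintype.card κ, ?_, ?_, ?_, ?_, ?_⟩
  · exact fun k => if u ((Fintype.equivFin κ).symm k) = 0 then 0 else
      w ((Fintype.equivFin κ).symm k) * σ⁻¹ / u ((Fintype.equivFin κ).symm k)
  · exact fun k => u ((Fintype.equivFin κ).symm k)
  · intro k
    split_ifs with h
    · exact le_refl 0
    · exact div_nonneg (mul_nonneg (hw0 _) (by positivity)) (hu _).1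
  · exact fun k => (hu _).1
  · intro i
    have hx : (s i)⁻¹ = ∑ k : κ, w k * (σ⁻¹ * u k ^ (e i)) := by
      rw [← hcomp i, ← hsum]
      rw [Finset.sum_apply]
      refine Finset.sum_congr rfl fun k _ => ?_
      rw [Pi.smul_apply, smul_eq_mul, ← hfu k]
    rw [hx, ← Equiv.sum_comp (Fintype.equivFin κ).symm (fun k => w k * (σ⁻¹ * u k ^ (e i)))]
    refine Finset.sum_congr rfl fun k _ => ?_
    set a := (Fintype.equivFin κ).symm k
    by_cases h : u a = 0
    · rw [h, if_pos rfl, Real.zero_rpow (by linarith [he i]),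
        Real.zero_rpow (ne_of_gt (div_pos (hspos i) hσ))]
      ring
    · have hupos : 0 < u a := lt_of_le_of_ne (hu a).1 (Ne.symm h)
      rw [if_neg h]
      have : u a ^ (s i / σ) = u a ^ (e i) * u a := by
        rw [show s i / σ = e i + 1 by simp [hedef], Real.rpow_add hupos, Real.rpow_one]
      rw [this]
      field_simp

/-- Expansion of the `m`-th power of a sum as a sum over index tuples. -/
lemma aux_sum_prod_pow {m n : ℕ} (g : Fin n → ℝ) :
    ∑ i : Fin m → Fin n, ∏ j, g (i j) = (∑ t, g t) ^ m := by
  classical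
  rw [Finset.sum_pow' Finset.univ g m, Fintype.piFinset_univ]

/-- Theorem 3.1: for an even order generalized Cauchy tensor with `d_i ≠ 0` for all `i`,
complete decomposability, the SOS property, positive semi-definiteness and positivity of
the generating vector `c` are all equivalent. -/
theorem stmt_0 (m n : ℕ) (hm : 2 ≤ m) (hme : Even m) (hn : 1 ≤ n)
    (c d : Fin n → ℝ)
    (hc : ∀ i : Fin m → Fin n, ∑ j, c (i j) ≠ 0)
    (hd : ∀ i : Fin n, d i ≠ 0) :
    List.TFAE [IsCompletelyDecomposable m n (genCauchy m n c d),
               IsSOS m n (genCauchy m n c d),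
               IsPSD m n (genCauchy m n c d),
               ∀ i : Fin n, 0 < c i] := by
  classical
  tfae_have 1 → 2 := by
    rintro ⟨r, u, hu⟩
    refine ⟨r, fun k => (∑ j : Fin n, MvPolynomial.C (u k j) * MvPolynomial.X j) ^ (m / 2),
      fun k => ?_, fun x => ?_⟩
    · have := (MvPolynomial.IsHomogeneous.sum Finset.univ
        (fun j => MvPolynomial.C (u k j) * MvPolynomial.X j) 1
        (fun j _ => MvPolynomial.isHomogeneous_C_mul_X _ _)).pow (m / 2)
      simpa using this
    · have heval : ∀ k, MvPolynomial.eval x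
          ((∑ j : Fin n, MvPolynomial.C (u k j) * MvPolynomial.X j) ^ (m / 2))
          = (∑ j, u k j * x j) ^ (m / 2) := by
        intro k; simp
      have hdm : m / 2 * 2 = m := Nat.div_mul_cancel hme.two_dvd
      calc tApply m n (genCauchy m n c d) x
          = ∑ k, (∑ j, u k j * x j) ^ m := by
            rw [tApply]
            simp_rw [hu, Finset.sum_mul]
            rw [Finset.sum_comm]
            refine Finset.sum_congr rfl fun k _ => ?_
            rw [← aux_sum_prod_pow (fun t => u k t * x t)]
            refine Finset.sum_congr rfl fun i _ => ?_
            rw [← Finset.prod_mul_distrib]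
        _ = ∑ k, (MvPolynomial.eval x ((∑ j : Fin n, MvPolynomial.C (u k j)
              * MvPolynomial.X j) ^ (m / 2))) ^ 2 := by
            refine Finset.sum_congr rfl fun k _ => ?_
            rw [heval, ← pow_mul, hdm]
  tfae_have 2 → 3 := by
    rintro ⟨r, p, hp, heq⟩ x
    rw [heq x]
    exact Finset.sum_nonneg fun k _ => sq_nonneg _
  tfae_have 3 → 4 := by
    intro hpsd i
    set x : Fin n → ℝ := fun t => if t = i then 1 else 0 with hxdef
    have hval : tApply m n (genCauchy m n c d) x = genCauchy m n c d (fun _ => i) := by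
      rw [tApply]
      rw [Finset.sum_eq_single_of_mem (fun _ => i) (Finset.mem_univ _)]
      · have : ∏ j : Fin m, x ((fun _ => i) j) = 1 := by
          simp [hxdef]
        rw [this, mul_one]
      · intro idx _ hne
        have : ∃ j, idx j ≠ i := by
          by_contra hcon
          push_neg at hcon
          exact hne (funext hcon)
        obtain ⟨j, hj⟩ := this
        have : ∏ j', x (idx j') = 0 :=
          Finset.prod_eq_zero (Finset.mem_univ j) (by simp [hxdef, hj])
        rw [this, mul_zero]
    have hgc : genCauchy m n c d (fun _ => i) = d i ^ m / (m * c i) := by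
      rw [genCauchy]
      simp [Finset.prod_const, Finset.sum_const, Finset.card_univ, nsmul_eq_mul]
    have hpos : 0 < d i ^ m := hme.pow_pos (hd i)
    have hne : (m : ℝ) * c i ≠ 0 := by
      have := hc (fun _ => i)
      simpa [Finset.sum_const, Finset.card_univ, nsmul_eq_mul] using this
    have h0 : 0 ≤ d i ^ m / ((m : ℝ) * c i) := by
      rw [← hgc, ← hval]; exact hpsd x
    by_contra hci
    push_neg at hci
    have hmc : (m : ℝ) * c i < 0 := by
      rcases lt_or_eq_of_le hci with h | h
      · have hm0 : (0:ℝ) < m := by exact_mod_cast (by omega : 0 < m)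
        exact mul_neg_of_pos_of_neg hm0 h
      · exact absurd (by rw [h, mul_zero]) hne
    have := div_neg_of_pos_of_neg hpos hmc
    linarith
  tfae_have 4 → 1 := by
    intro h4
    haveI : Nonempty (Fin n) := ⟨⟨0, hn⟩⟩
    haveI : Nonempty (Fin m) := ⟨⟨0, by omega⟩⟩
    set σ : ℝ := Finset.univ.inf' Finset.univ_nonempty c with hσdef
    have hσle : ∀ j, σ ≤ c j := fun j => Finset.inf'_le c (Finset.mem_univ j)
    have hσ : 0 < σ := by
      rw [hσdef, Finset.lt_inf'_iff]
      exact fun j _ => h4 j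
    set s : (Fin m → Fin n) → ℝ := fun i => ∑ j, c (i j) with hsdef
    have hs2 : ∀ i, 2 * σ ≤ s i := by
      intro i
      have h1 : (m : ℝ) * σ ≤ s i := by
        rw [hsdef]
        calc (m : ℝ) * σ = ∑ _j : Fin m, σ := by
              rw [Finset.sum_const, Finset.card_univ, Fintype.card_fin, nsmul_eq_mul]
          _ ≤ ∑ j, c (i j) := Finset.sum_le_sum fun j _ => hσle (i j)
      have h2 : (2 : ℝ) ≤ m := by exact_mod_cast hm
      nlinarith
    obtain ⟨r, v, t, hv, ht, hq⟩ := aux_quadrature σ hσ s hs2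
    refine ⟨r, fun k j => d j * (v k ^ ((m:ℝ)⁻¹)) * (t k ^ (c j / σ)), fun i => ?_⟩
    have hm0 : (m : ℝ) ≠ 0 := by positivity
    have key : ∀ k, ∏ j, (d (i j) * (v k ^ ((m:ℝ)⁻¹)) * (t k ^ (c (i j) / σ)))
        = (∏ j, d (i j)) * (v k * t k ^ (s i / σ)) := by
      intro k
      rw [Finset.prod_mul_distrib, Finset.prod_mul_distrib]
      have hvk : ∏ _j : Fin m, v k ^ ((m:ℝ)⁻¹) = v k := by
        rw [Finset.prod_const, Finset.card_univ, Fintype.card_fin,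
          ← Real.rpow_natCast (v k ^ ((m:ℝ)⁻¹)) m, ← Real.rpow_mul (hv k),
          inv_mul_cancel₀ hm0, Real.rpow_one]
      have htk : ∏ j, t k ^ (c (i j) / σ) = t k ^ (s i / σ) := by
        rcases lt_or_eq_of_le (ht k) with hpos | h0
        · simp_rw [Real.rpow_def_of_pos hpos]
          rw [← Real.exp_sum]
          congr 1
          rw [← Finset.mul_sum, hsdef, Finset.sum_div]
        · rw [← h0]
          have hz : ∀ a : ℝ, 0 < a → (0:ℝ) ^ (a / σ) = 0 := fun a ha =>
            Real.zero_rpow (ne_of_gt (div_pos ha hσ))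
          rw [Finset.prod_eq_zero (Finset.mem_univ (Classical.arbitrary (Fin m)))
            (hz _ (h4 _)), hz (s i) (by
              have := hs2 i; linarith)]
      rw [hvk, htk]
      ring
    simp_rw [key]
    rw [← Finset.mul_sum, ← hq i, genCauchy, div_eq_mul_inv]
  tfae_finish
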